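/- For every propositional base K and every formula φ, K ⊩_{a2} φ if and only if K ⊩₂ φ. -/
import Mathlib


namespace Occ

/-- Propositional formulas over variables indexed by `ℕ`,
built from variables using negation and conjunction. -/
inductive Form : Type where
  | var : ℕ → Form
  | neg : Form → Form
  | conj : Form → Form → Form
deriving DecidableEq

/-- Boolean evaluation of a formula under an interpretation `w`. -/
def eval (w : ℕ → Bool) : Form → Bool
  | .var p => w p
  | .neg φ => !(eval w φ)
  | .conj φ ψ => eval w φ && eval w ψ

/-- The variables occurring in a formula. -/
def vars : Form → Finset ℕ
  | .var p => {p}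
  | .neg φ => vars φ
  | .conj φ ψ => vars φ ∪ vars ψ

/-- A step in a path addressing a subformula occurrence. -/
inductive Step : Type where
  | neg | left | right
deriving DecidableEq

/-- `occAt φ l pol = some (p, pol')` iff the path `l` addresses an occurrence of the
variable `p` in `φ`, and this occurrence has polarity `pol'` (`true` = positive)
when the ambient polarity of `φ` is `pol`. -/
def occAt : Form → List Step → Bool → Option (ℕ × Bool)
  | .var p, [], pol => some (p, pol)
  | .neg φ, .neg :: l, pol => occAt φ l (!pol)
  | .conj φ _, .left :: l, pol => occAt φ l pol
  | .conj _ ψ, .right :: l, pol => occAt ψ l pol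
  | _, _, _ => none

/-- A variable occurrence in a base: a formula together with a path into it. -/
abbrev Occurrence : Type := Form × List Step

/-- A propositional base: a finite set of formulas. -/
abbrev PB : Type := Finset Form

/-- `o` is a variable occurrence in the base `K`. -/
def IsOcc (K : PB) (o : Occurrence) : Prop :=
  o.1 ∈ K ∧ ∃ p pol, occAt o.1 o.2 true = some (p, pol)

/-- `o` is an occurrence of the variable `p` in `K`, of polarity `pol`. -/
def IsOccOf (K : PB) (o : Occurrence) (p : ℕ) (pol : Bool) : Prop :=
  o.1 ∈ K ∧ occAt o.1 o.2 true = some (p, pol)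

/-- `o` is an occurrence of the variable `p` in `K`. -/
def IsOccVar (K : PB) (o : Occurrence) (p : ℕ) : Prop :=
  ∃ pol, IsOccOf K o p pol

/-- `o` is a positive variable occurrence in `K`. -/
def IsPosOcc (K : PB) (o : Occurrence) : Prop := ∃ p, IsOccOf K o p true

/-- `o` is a negative variable occurrence in `K`. -/
def IsNegOcc (K : PB) (o : Occurrence) : Prop := ∃ p, IsOccOf K o p false

/-- `o` and `o'` are occurrences of the same variable. -/
def sameVar (o o' : Occurrence) : Prop :=
  ∃ p pol pol', occAt o.1 o.2 true = some (p, pol) ∧ occAt o'.1 o'.2 true = some (p, pol')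

/-- The variables occurring in a base. -/
def varsPB (K : PB) : Finset ℕ := K.sup vars

/-- `w` is a (Boolean) model of the base `K` (i.e. of the conjunction of its formulas). -/
def modelsPB (w : ℕ → Bool) (K : PB) : Prop := ∀ φ ∈ K, eval w φ = true

/-- A base is consistent iff the conjunction of its formulas has a model. -/
def ConsistentPB (K : PB) : Prop := ∃ w, modelsPB w K

/-- Classical entailment from a base. -/
def Entails (K : PB) (φ : Form) : Prop := ∀ w, modelsPB w K → eval w φ = true

/-- Rename every variable occurrence of a formula, the new variable of the
occurrence at path `l` being `f l`. -/
def renameBy : (List Step → ℕ) → Form → Form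
  | f, .var _ => .var (f [])
  | f, .neg φ => .neg (renameBy (fun l => f (.neg :: l)) φ)
  | f, .conj φ ψ =>
      .conj (renameBy (fun l => f (.left :: l)) φ) (renameBy (fun l => f (.right :: l)) ψ)

/-- The formula `φ` (viewed as a member of a base) with each occurrence `o`
replaced by the variable `R o`. -/
def renameForm (R : Occurrence → ℕ) (φ : Form) : Form :=
  renameBy (fun l => R (φ, l)) φ

/-- A C-renaming of `K`: it assigns a pairwise distinct fresh variable to each
occurrence of `K`. -/
structure IsCRenaming (K : PB) (R : Occurrence → ℕ) : Prop where
  fresh : ∀ o, IsOcc K o → R o ∉ varsPB K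
  inj : ∀ o o', IsOcc K o → IsOcc K o' → R o = R o' → o = o'

/-- Binary relations on occurrences, viewed as sets of ordered pairs. -/
abbrev Rel : Type := Set (Occurrence × Occurrence)

/-- `r` is an equivalence relation on `Occ(K)`. -/
structure IsEquivOn (K : PB) (r : Rel) : Prop where
  dom : ∀ q ∈ r, IsOcc K q.1 ∧ IsOcc K q.2
  refl : ∀ o, IsOcc K o → (o, o) ∈ r
  symm : ∀ q ∈ r, (q.2, q.1) ∈ r
  trans : ∀ a b c : Occurrence, (a, b) ∈ r → (b, c) ∈ r → (a, c) ∈ r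

/-- Compliance: related occurrences are occurrences of the same variable. -/
def Compliant (r : Rel) : Prop := ∀ q ∈ r, sameVar q.1 q.2

/-- Consistency of the formula `⋀R(K) ∧ ⋀_{(o,o')∈r} (R(o) ↔ R(o'))`. -/
def RelConsistent (K : PB) (R : Occurrence → ℕ) (r : Rel) : Prop :=
  ∃ w : ℕ → Bool, (∀ φ ∈ K, eval w (renameForm R φ) = true) ∧
    ∀ q ∈ r, w (R q.1) = w (R q.2)

/-- Minimal Inconsistency Relation of `K` (w.r.t. the C-renaming `R`). -/
def IsMIR (K : PB) (R : Occurrence → ℕ) (r : Rel) : Prop :=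
  IsEquivOn K r ∧ Compliant r ∧ ¬ RelConsistent K R r ∧
    ∀ r', IsEquivOn K r' → Compliant r' → ¬ RelConsistent K R r' → ¬ r' ⊂ r

/-- Maximal Consistency Relation of `K` (w.r.t. the C-renaming `R`). -/
def IsMCR (K : PB) (R : Occurrence → ℕ) (r : Rel) : Prop :=
  IsEquivOn K r ∧ Compliant r ∧ RelConsistent K R r ∧
    ∀ r', IsEquivOn K r' → Compliant r' → RelConsistent K R r' → ¬ r ⊂ r'

/-- The relation `∼_c^K`: relating occurrences of `K` of the same variable. -/
def sameVarRel (K : PB) : Rel :=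
  {q | IsOcc K q.1 ∧ IsOcc K q.2 ∧ sameVar q.1 q.2}

/-- `PN(r)`: related pairs consisting of a positive and a negative occurrence. -/
def PN (K : PB) (r : Rel) : Rel :=
  {q | q ∈ r ∧ IsPosOcc K q.1 ∧ IsNegOcc K q.2}

/-- A BMCR: an MCR satisfying Maximality-2. -/
def IsBMCR (K : PB) (R : Occurrence → ℕ) (r : Rel) : Prop :=
  IsMCR K R r ∧
    ∀ r', IsEquivOn K r' → Compliant r' → RelConsistent K R r' → ¬ PN K r ⊂ PN K r'

/-- `H` is a hitting set of the collection `S`. -/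
def IsHittingSet {α : Type} (S : Set (Set α)) (H : Set α) : Prop :=
  ∀ s ∈ S, (s ∩ H).Nonempty

/-- `H` is a minimal hitting set of the collection `S`. -/
def IsMinHittingSet {α : Type} (S : Set (Set α)) (H : Set α) : Prop :=
  IsHittingSet S H ∧ ∀ H', H' ⊂ H → ¬ IsHittingSet S H'

/-- `r` is `H`-maximal (for an equivalence relation `r ⊆ ∼_c^K`). -/
def IsHMaximal (K : PB) (H r : Rel) : Prop :=
  r ∩ H = ∅ ∧
    ∀ r', IsEquivOn K r' → r' ⊆ sameVarRel K → r ⊂ r' → (r' ∩ H).Nonempty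

/-- `r` is `H`-minimal (for an equivalence relation `r ⊆ ∼_c^K`). -/
def IsHMinimal (K : PB) (H r : Rel) : Prop :=
  H ⊆ r ∧ ∀ r', IsEquivOn K r' → r' ⊂ r → ¬ H ⊆ r'

/-- The set of all MIRs of `K`. -/
def MIRs (K : PB) (R : Occurrence → ℕ) : Set Rel := {r | IsMIR K R r}

/-- The set of all C-MCRs of `K`: relations `θ ⊆ ∼_c^K` with `∼_c^K ∖ θ` an MCR. -/
def CMCRs (K : PB) (R : Occurrence → ℕ) : Set Rel :=
  {θ | θ ⊆ sameVarRel K ∧ IsMCR K R (sameVarRel K \ θ)}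

/-- `ρ` is a `∼`-renaming for the equivalence relation `r` on `Occ(K)`:
it assigns a distinct variable to each equivalence class (so it is constant on
classes and distinguishes distinct classes), and any class containing all the
occurrences of a variable `p` is mapped to `p` itself. -/
def IsClassRenaming (K : PB) (r : Rel) (ρ : Occurrence → ℕ) : Prop :=
  (∀ o o', IsOcc K o → IsOcc K o' → (ρ o = ρ o' ↔ (o, o') ∈ r)) ∧
    (∀ o p, IsOccVar K o p → (∀ o', IsOccVar K o' p → (o, o') ∈ r) → ρ o = p)

/-- `σ` encodes a tuple `(q₁,…,q_m) ∈ P(ρ_∼, S)` where `S = (p₁,…,p_m)`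
enumerates `var(K) ∩ var(φ)`: it maps each shared variable `p` to a member of
`⌈ρ⌉(p)` and is the identity elsewhere. -/
def IsTupleChoice (K : PB) (φ : Form) (ρ : Occurrence → ℕ) (σ : ℕ → ℕ) : Prop :=
  (∀ p, p ∈ varsPB K → p ∈ vars φ → ∃ o, IsOccVar K o p ∧ σ p = ρ o) ∧
    (∀ p, ¬ (p ∈ varsPB K ∧ p ∈ vars φ) → σ p = p)

/-- Simultaneous substitution of variables by variables. -/
def substV (σ : ℕ → ℕ) : Form → Form
  | .var p => .var (σ p)
  | .neg φ => .neg (substV σ φ)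
  | .conj φ ψ => .conj (substV σ φ) (substV σ ψ)

/-- `ρ_∼(K) ⊢ ψ`. -/
def rhoEntails (K : PB) (ρ : Occurrence → ℕ) (ψ : Form) : Prop :=
  ∀ w : ℕ → Bool, (∀ φ ∈ K, eval w (renameForm ρ φ) = true) → eval w ψ = true

/-- The inference relation `K ⊩₁ φ`. -/
def Inf1 (K : PB) (R : Occurrence → ℕ) (φ : Form) : Prop :=
  ∀ r ρ, IsMCR K R r → IsClassRenaming K r ρ →
    ∃ σ, IsTupleChoice K φ ρ σ ∧ rhoEntails K ρ (substV σ φ)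

/-- The inference relation `K ⊩₂ φ`. -/
def Inf2 (K : PB) (R : Occurrence → ℕ) (φ : Form) : Prop :=
  ∀ r ρ, IsMCR K R r → IsClassRenaming K r ρ →
    ∀ σ, IsTupleChoice K φ ρ σ → rhoEntails K ρ (substV σ φ)

/-- The inference relation `K ⊩₁^B φ`. -/
def Inf1B (K : PB) (R : Occurrence → ℕ) (φ : Form) : Prop :=
  ∀ r ρ, IsBMCR K R r → IsClassRenaming K r ρ →
    ∃ σ, IsTupleChoice K φ ρ σ ∧ rhoEntails K ρ (substV σ φ)

/-- The inference relation `K ⊩₂^B φ`. -/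
def Inf2B (K : PB) (R : Occurrence → ℕ) (φ : Form) : Prop :=
  ∀ r ρ, IsBMCR K R r → IsClassRenaming K r ρ →
    ∀ σ, IsTupleChoice K φ ρ σ → rhoEntails K ρ (substV σ φ)

/-- `μ` is an o-model of `K`: any interpretation `w` with `w (R o) = μ o` for all
occurrences `o` of `K` is a model of `⋀R(K)`. -/
def OModel (K : PB) (R : Occurrence → ℕ) (μ : Occurrence → Bool) : Prop :=
  ∀ w : ℕ → Bool, (∀ o, IsOcc K o → w (R o) = μ o) →
    ∀ φ ∈ K, eval w (renameForm R φ) = true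

/-- `diff_a(μ)`: pairs of occurrences of the same variable on which `μ` differs. -/
def diffA (K : PB) (μ : Occurrence → Bool) : Rel :=
  {q | IsOcc K q.1 ∧ IsOcc K q.2 ∧ sameVar q.1 q.2 ∧ μ q.1 ≠ μ q.2}

/-- `μ` is an a-minimal o-model of `K`. -/
def AMinOModel (K : PB) (R : Occurrence → ℕ) (μ : Occurrence → Bool) : Prop :=
  OModel K R μ ∧ ∀ μ', OModel K R μ' → ¬ diffA K μ' ⊂ diffA K μ

/-- A Boolean interpretation `w` is compatible with an o-interpretation `μ`. -/
def Compatible (K : PB) (μ : Occurrence → Bool) (w : ℕ → Bool) : Prop :=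
  ∀ p ∈ varsPB K, ∃ o, IsOccVar K o p ∧ w p = μ o

/-- The inference relation `K ⊩_{a1} φ`. -/
def InfA1 (K : PB) (R : Occurrence → ℕ) (φ : Form) : Prop :=
  ∀ μ, AMinOModel K R μ → ∃ w, Compatible K μ w ∧ eval w φ = true

/-- The inference relation `K ⊩_{a2} φ`. -/
def InfA2 (K : PB) (R : Occurrence → ℕ) (φ : Form) : Prop :=
  ∀ μ, AMinOModel K R μ → ∀ w, Compatible K μ w → eval w φ = true

/-- LP_m evaluation: an LP_m interpretation assigns a (nonempty) set of truth
values to each variable; it extends to formulas pointwise. -/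
def lpEval (lam : ℕ → Set Bool) : Form → Set Bool
  | .var p => lam p
  | .neg φ => (fun v => !v) '' lpEval lam φ
  | .conj φ ψ => Set.image2 (· && ·) (lpEval lam φ) (lpEval lam ψ)

/-- `lam` is an LP_m interpretation: each variable gets a nonempty set of values. -/
def IsLPInterp (lam : ℕ → Set Bool) : Prop := ∀ p, (lam p).Nonempty

/-- `lam` is an LP_m model of `⋀K`. -/
def LPModelPB (lam : ℕ → Set Bool) (K : PB) : Prop := ∀ φ ∈ K, true ∈ lpEval lam φ

/-- `λ! = {p : λ(p) = {0,1}}`. -/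
def lpBang (lam : ℕ → Set Bool) : Set ℕ := {p | lam p = Set.univ}

/-- `lam` is a minimal LP_m model of `⋀K`. -/
def MinLPModelPB (K : PB) (lam : ℕ → Set Bool) : Prop :=
  IsLPInterp lam ∧ LPModelPB lam K ∧
    ∀ lam', IsLPInterp lam' → LPModelPB lam' K → ¬ lpBang lam' ⊂ lpBang lam

/-- `K ⊢_{LPm} φ`. -/
def LPmEntails (K : PB) (φ : Form) : Prop :=
  ∀ lam, MinLPModelPB K lam → true ∈ lpEval lam φ

/-- Replace the subformula occurrence of `φ` addressed by the path `l` by `ψ`. -/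
def replaceAt : Form → List Step → Form → Form
  | _, [], ψ => ψ
  | .neg φ, .neg :: l, ψ => .neg (replaceAt φ l ψ)
  | .conj φ χ, .left :: l, ψ => .conj (replaceAt φ l ψ) χ
  | .conj φ χ, .right :: l, ψ => .conj φ (replaceAt χ l ψ)
  | φ, _, _ => φ

/-- The equivalence relation `∼_λ` induced on `Occ(K)` by an LP_m interpretation:
its classes are `Occ(p,K)` for `|λ(p)| = 1` and `PosOcc(p,K)`, `NegOcc(p,K)` for
`λ(p) = {0,1}`. -/
def lamRel (K : PB) (lam : ℕ → Set Bool) : Rel :=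
  {q | ∃ p pol pol', IsOccOf K q.1 p pol ∧ IsOccOf K q.2 p pol' ∧
    (lam p = Set.univ → pol = pol')}

open scoped Classical in
/-- The o-interpretation `μ_λ^K` associated with an LP_m interpretation `λ`. -/
noncomputable def muOf (lam : ℕ → Set Bool) (o : Occurrence) : Bool :=
  match occAt o.1 o.2 true with
  | some (p, pol) =>
      if lam p = ({false} : Set Bool) then false
      else if lam p = ({true} : Set Bool) then true
      else pol
  | none => false

end Occ
namespace Occ
section Aux
open scoped Classical

/-- Abstract evaluation of a formula from values assigned to its occurrence paths. -/
def evalO (g : List Step → Bool) : Form → Bool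
  | .var _ => g []
  | .neg ψ => !(evalO (fun l => g (.neg :: l)) ψ)
  | .conj ψ χ => evalO (fun l => g (.left :: l)) ψ && evalO (fun l => g (.right :: l)) χ

lemma eval_renameBy (w : ℕ → Bool) (f : List Step → ℕ) (ψ : Form) :
    eval w (renameBy f ψ) = evalO (fun l => w (f l)) ψ := by
  induction ψ generalizing f with
  | var p => rfl
  | neg ψ ih => simp [renameBy, eval, evalO, ih]
  | conj ψ χ ih1 ih2 => simp [renameBy, eval, evalO, ih1, ih2]

lemma eval_renameForm (w : ℕ → Bool) (f : Occurrence → ℕ) (ψ : Form) :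
    eval w (renameForm f ψ) = evalO (fun l => w (f (ψ, l))) ψ :=
  eval_renameBy ..

lemma evalO_congr (ψ : Form) (pol : Bool) (g g' : List Step → Bool)
    (h : ∀ l, (occAt ψ l pol).isSome → g l = g' l) : evalO g ψ = evalO g' ψ := by
  induction ψ generalizing pol g g' with
  | var p => exact h [] (by simp [occAt])
  | neg ψ ih =>
      simp only [evalO]
      rw [ih (!pol) _ _ (fun l hl => h (.neg :: l) hl)]
  | conj ψ χ ih1 ih2 =>
      simp only [evalO]
      rw [ih1 pol _ _ (fun l hl => h (.left :: l) hl),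
        ih2 pol _ _ (fun l hl => h (.right :: l) hl)]

lemma eval_substV' (σ : ℕ → ℕ) (w : ℕ → Bool) (ψ : Form) :
    eval w (substV σ ψ) = eval (fun p => w (σ p)) ψ := by
  induction ψ with
  | var p => rfl
  | neg ψ ih => simp [substV, eval, ih]
  | conj ψ χ ih1 ih2 => simp [substV, eval, ih1, ih2]

lemma eval_congr_vars (ψ : Form) (w w' : ℕ → Bool) (h : ∀ p ∈ vars ψ, w p = w' p) :
    eval w ψ = eval w' ψ := by
  induction ψ with
  | var p => exact h p (by simp [vars])
  | neg ψ ih => simp only [eval]; rw [ih (fun p hp => h p hp)]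
  | conj ψ χ ih1 ih2 =>
      simp only [eval]
      rw [ih1 (fun p hp => h p (Finset.mem_union_left _ hp)),
        ih2 (fun p hp => h p (Finset.mem_union_right _ hp))]

lemma var_mem_of_occAt : ∀ (ψ : Form) (l : List Step) (pol : Bool) (p : ℕ) (b : Bool),
    occAt ψ l pol = some (p, b) → p ∈ vars ψ := by
  intro ψ
  induction ψ with
  | var q =>
      intro l pol p b h
      cases l with
      | nil => simp [occAt] at h; simp [vars, h.1]
      | cons s l => cases s <;> simp [occAt] at h
  | neg ψ ih =>
      intro l pol p b h
      cases l with
      | nil => simp [occAt] at h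
      | cons s l =>
          cases s with
          | neg => exact ih l (!pol) p b h
          | left => simp [occAt] at h
          | right => simp [occAt] at h
  | conj ψ χ ih1 ih2 =>
      intro l pol p b h
      cases l with
      | nil => simp [occAt] at h
      | cons s l =>
          cases s with
          | neg => simp [occAt] at h
          | left => exact Finset.mem_union_left _ (ih1 l pol p b h)
          | right => exact Finset.mem_union_right _ (ih2 l pol p b h)

lemma exists_occAt (ψ : Form) (p : ℕ) (hp : p ∈ vars ψ) :
    ∀ pol, ∃ l b, occAt ψ l pol = some (p, b) := by
  induction ψ with
  | var q =>
      intro pol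
      simp [vars] at hp
      exact ⟨[], pol, by simp [occAt, hp]⟩
  | neg ψ ih =>
      intro pol
      obtain ⟨l, b, h⟩ := ih hp (!pol)
      exact ⟨.neg :: l, b, h⟩
  | conj ψ χ ih1 ih2 =>
      intro pol
      rcases Finset.mem_union.1 hp with h | h
      · obtain ⟨l, b, hh⟩ := ih1 h pol; exact ⟨.left :: l, b, hh⟩
      · obtain ⟨l, b, hh⟩ := ih2 h pol; exact ⟨.right :: l, b, hh⟩

lemma mem_varsPB_of_occ {K : PB} {o : Occurrence} {p : ℕ} (h : IsOccVar K o p) :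
    p ∈ varsPB K := by
  obtain ⟨pol, hmem, hocc⟩ := h
  exact Finset.mem_sup.2 ⟨o.1, hmem, var_mem_of_occAt _ _ _ _ _ hocc⟩

lemma exists_occ_of_mem_varsPB {K : PB} {p : ℕ} (h : p ∈ varsPB K) :
    ∃ o, IsOccVar K o p := by
  obtain ⟨ψ, hψ, hp⟩ := Finset.mem_sup.1 h
  obtain ⟨l, b, hl⟩ := exists_occAt ψ p hp true
  exact ⟨(ψ, l), b, hψ, hl⟩

lemma isOcc_of_isOccVar {K : PB} {o : Occurrence} {p : ℕ} (h : IsOccVar K o p) :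
    IsOcc K o := by
  obtain ⟨pol, hmem, hocc⟩ := h
  exact ⟨hmem, p, pol, hocc⟩

lemma sameVar_refl {K : PB} {o : Occurrence} (h : IsOcc K o) : sameVar o o := by
  obtain ⟨_, p, pol, hocc⟩ := h
  exact ⟨p, pol, pol, hocc, hocc⟩

lemma sameVar_symm {o o' : Occurrence} (h : sameVar o o') : sameVar o' o := by
  obtain ⟨p, pol, pol', h1, h2⟩ := h
  exact ⟨p, pol', pol, h2, h1⟩

lemma sameVar_trans {a b c : Occurrence} (h1 : sameVar a b) (h2 : sameVar b c) :
    sameVar a c := by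
  obtain ⟨p, pol, pol', ha, hb⟩ := h1
  obtain ⟨q, pol2, pol2', hb', hc⟩ := h2
  rw [hb] at hb'
  obtain ⟨rfl, -⟩ : p = q ∧ pol' = pol2 := by
    injection hb' with h; exact ⟨congrArg Prod.fst h, congrArg Prod.snd h⟩
  exact ⟨p, pol, pol2', ha, hc⟩

end Aux
end Occ
namespace Occ
section Aux2
open scoped Classical

/-- The relation of agreement of `μ` on occurrences of the same variable. -/
def agreeRel (K : PB) (μ : Occurrence → Bool) : Rel :=
  {q | IsOcc K q.1 ∧ IsOcc K q.2 ∧ sameVar q.1 q.2 ∧ μ q.1 = μ q.2}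

lemma agreeRel_equivOn (K : PB) (μ : Occurrence → Bool) : IsEquivOn K (agreeRel K μ) := by
  refine ⟨fun q hq => ⟨hq.1, hq.2.1⟩, fun o ho => ⟨ho, ho, sameVar_refl ho, rfl⟩,
    fun q hq => ⟨hq.2.1, hq.1, sameVar_symm hq.2.2.1, hq.2.2.2.symm⟩, ?_⟩
  intro a b c hab hbc
  exact ⟨hab.1, hbc.2.1, sameVar_trans hab.2.2.1 hbc.2.2.1, hab.2.2.2.trans hbc.2.2.2⟩

lemma agreeRel_compliant (K : PB) (μ : Occurrence → Bool) : Compliant (agreeRel K μ) :=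
  fun _ hq => hq.2.2.1

lemma diffA_eq (K : PB) (μ : Occurrence → Bool) :
    diffA K μ = sameVarRel K \ agreeRel K μ := by
  ext ⟨o, o'⟩
  simp only [diffA, sameVarRel, agreeRel, Set.mem_setOf_eq, Set.mem_diff]
  tauto

lemma subset_sameVarRel {K : PB} {r : Rel} (hEq : IsEquivOn K r) (hC : Compliant r) :
    r ⊆ sameVarRel K :=
  fun q hq => ⟨(hEq.dom q hq).1, (hEq.dom q hq).2, hC q hq⟩

/-- A canonical Boolean interpretation agreeing with an o-interpretation. -/
noncomputable def wOf (K : PB) (R : Occurrence → ℕ) (μ : Occurrence → Bool) (n : ℕ) : Bool :=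
  if h : ∃ o, IsOcc K o ∧ R o = n then μ h.choose else false

lemma wOf_eq {K : PB} {R : Occurrence → ℕ} (hR : IsCRenaming K R) (μ : Occurrence → Bool)
    {o : Occurrence} (ho : IsOcc K o) : wOf K R μ (R o) = μ o := by
  have h : ∃ o', IsOcc K o' ∧ R o' = R o := ⟨o, ho, rfl⟩
  rw [wOf, dif_pos h]
  obtain ⟨h1, h2⟩ := h.choose_spec
  rw [hR.inj _ _ h1 ho h2]

lemma isOcc_of_path {K : PB} {ψ : Form} (hψ : ψ ∈ K) {l : List Step}
    (hl : (occAt ψ l true).isSome) : IsOcc K (ψ, l) := by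
  obtain ⟨pr, hpr⟩ := Option.isSome_iff_exists.1 hl
  exact ⟨hψ, pr.1, pr.2, by rw [hpr]⟩

lemma oModel_iff {K : PB} {R : Occurrence → ℕ} (hR : IsCRenaming K R) (μ : Occurrence → Bool) :
    OModel K R μ ↔ ∀ ψ ∈ K, evalO (fun l => μ (ψ, l)) ψ = true := by
  constructor
  · intro hμ ψ hψ
    have h := hμ (wOf K R μ) (fun o ho => wOf_eq hR μ ho) ψ hψ
    rw [eval_renameForm] at h
    rw [← h]
    exact (evalO_congr ψ true _ _ (fun l hl => wOf_eq hR μ (isOcc_of_path hψ hl))).symm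
  · intro h w hw ψ hψ
    rw [eval_renameForm,
      evalO_congr ψ true _ (fun l => μ (ψ, l)) (fun l hl => hw _ (isOcc_of_path hψ hl))]
    exact h ψ hψ

lemma relConsistent_of_omodel {K : PB} {R : Occurrence → ℕ} (hR : IsCRenaming K R)
    {μ : Occurrence → Bool} {r' : Rel} (hμ : OModel K R μ) (hsub : r' ⊆ agreeRel K μ) :
    RelConsistent K R r' := by
  refine ⟨wOf K R μ, fun ψ hψ => hμ _ (fun o ho => wOf_eq hR μ ho) ψ hψ, ?_⟩
  intro q hq
  obtain ⟨h1, h2, _, h4⟩ := hsub hq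
  rw [wOf_eq hR μ h1, wOf_eq hR μ h2, h4]

lemma oModel_of_models {K : PB} {R : Occurrence → ℕ} {w : ℕ → Bool}
    (hw : ∀ ψ ∈ K, eval w (renameForm R ψ) = true) :
    OModel K R (fun o => w (R o)) := by
  intro w1 hw1 ψ hψ
  rw [eval_renameForm,
    evalO_congr ψ true _ (fun l => w (R (ψ, l))) (fun l hl => hw1 _ (isOcc_of_path hψ hl)),
    ← eval_renameForm]
  exact hw ψ hψ

/-- From an a-minimal o-model, the agreement relation is an MCR. -/
lemma isMCR_agreeRel {K : PB} {R : Occurrence → ℕ} {μ : Occurrence → Bool}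
    (hR : IsCRenaming K R) (hmin : AMinOModel K R μ) : IsMCR K R (agreeRel K μ) := by
  obtain ⟨hμ, hminimal⟩ := hmin
  refine ⟨agreeRel_equivOn K μ, agreeRel_compliant K μ,
    relConsistent_of_omodel hR hμ (subset_refl _), ?_⟩
  intro r' hEq hComp hCons hss
  obtain ⟨w'', hw1, hw2⟩ := hCons
  have hμ'model : OModel K R (fun o => w'' (R o)) := oModel_of_models hw1
  set μ' : Occurrence → Bool := fun o => w'' (R o) with hμ'def
  have hsub' : r' ⊆ agreeRel K μ' := by
    intro q hq
    exact ⟨(hEq.dom q hq).1, (hEq.dom q hq).2, hComp q hq, hw2 q hq⟩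
  obtain ⟨q₀, hq₀r', hq₀⟩ := Set.exists_of_ssubset hss
  refine hminimal μ' hμ'model ?_
  rw [diffA_eq, diffA_eq]
  rw [Set.ssubset_def]
  refine ⟨?_, ?_⟩
  · intro q hq
    exact ⟨hq.1, fun hmem => hq.2 (hsub' (hss.1 hmem))⟩
  · intro hcont
    have hq₀svr : (q₀.1, q₀.2) ∈ sameVarRel K := subset_sameVarRel hEq hComp hq₀r'
    have h1 : q₀ ∈ sameVarRel K \ agreeRel K μ := ⟨hq₀svr, hq₀⟩
    have h2 := hcont h1
    exact h2.2 (hsub' hq₀r')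

lemma eq_agreeRel_of_isMCR {K : PB} {R : Occurrence → ℕ} {r : Rel} {μ : Occurrence → Bool}
    (hR : IsCRenaming K R) (hr : IsMCR K R r) (hμ : OModel K R μ)
    (hsub : r ⊆ agreeRel K μ) : r = agreeRel K μ := by
  by_contra hne
  exact hr.2.2.2 (agreeRel K μ) (agreeRel_equivOn K μ) (agreeRel_compliant K μ)
    (relConsistent_of_omodel hR hμ (subset_refl _)) (hsub.ssubset_of_ne hne)

lemma aMin_of_isMCR {K : PB} {R : Occurrence → ℕ} {r : Rel} {μ : Occurrence → Bool}
    (hR : IsCRenaming K R) (hr : IsMCR K R r) (hμ : OModel K R μ)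
    (hsub : r ⊆ agreeRel K μ) : AMinOModel K R μ := by
  have heq := eq_agreeRel_of_isMCR hR hr hμ hsub
  refine ⟨hμ, ?_⟩
  intro μ' hμ' hss
  rw [diffA_eq, diffA_eq] at hss
  refine hr.2.2.2 (agreeRel K μ') (agreeRel_equivOn K μ') (agreeRel_compliant K μ')
    (relConsistent_of_omodel hR hμ' (subset_refl _)) ?_
  rw [heq, Set.ssubset_def]
  constructor
  · intro q hq
    by_contra hq'
    have : q ∈ sameVarRel K \ agreeRel K μ' := ⟨⟨hq.1, hq.2.1, hq.2.2.1⟩, hq'⟩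
    exact (hss.1 this).2 hq
  · intro hcont
    obtain ⟨q₀, hq₀d, hq₀nd⟩ := Set.exists_of_ssubset hss
    have hq₀' : q₀ ∈ agreeRel K μ' := by
      by_contra hq
      exact hq₀nd ⟨hq₀d.1, hq⟩
    exact hq₀d.2 (hcont hq₀')

end Aux2
end Occ
namespace Occ
section Aux3
open scoped Classical

def varOf (o : Occurrence) : ℕ := ((occAt o.1 o.2 true).map Prod.fst).getD 0

lemma varOf_eq {K : PB} {o : Occurrence} {p : ℕ} (h : IsOccVar K o p) : varOf o = p := by
  obtain ⟨pol, _, hocc⟩ := h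
  simp [varOf, hocc]

lemma isOccVar_varOf {K : PB} {o : Occurrence} (ho : IsOcc K o) : IsOccVar K o (varOf o) := by
  obtain ⟨hmem, p, pol, hocc⟩ := ho
  have : varOf o = p := by simp [varOf, hocc]
  rw [this]
  exact ⟨pol, hmem, hocc⟩

lemma varOf_eq_of_sameVar {o o' : Occurrence} (h : sameVar o o') : varOf o = varOf o' := by
  obtain ⟨p, pol, pol', h1, h2⟩ := h
  simp [varOf, h1, h2]

def encS : Step → ℕ
  | .neg => 0
  | .left => 1
  | .right => 2

def encL : List Step → ℕ
  | [] => 0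
  | s :: l => Nat.pair (encS s) (encL l) + 1

def encF : Form → ℕ
  | .var p => Nat.pair 0 p
  | .neg ψ => Nat.pair 1 (encF ψ)
  | .conj ψ χ => Nat.pair 2 (Nat.pair (encF ψ) (encF χ))

def encO (o : Occurrence) : ℕ := Nat.pair (encF o.1) (encL o.2)

lemma encS_inj : Function.Injective encS := by
  intro a b h
  cases a <;> cases b <;> simp [encS] at h ⊢

lemma encL_inj : Function.Injective encL := by
  intro l1
  induction l1 with
  | nil =>
      intro l2 h
      cases l2 with
      | nil => rfl
      | cons s l => simp [encL] at h
  | cons s l ih =>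
      intro l2 h
      cases l2 with
      | nil => simp [encL] at h
      | cons s' l' =>
          simp only [encL, Nat.add_right_cancel_iff, Nat.pair_eq_pair] at h
          rw [encS_inj h.1, ih h.2]

lemma encF_inj : Function.Injective encF := by
  intro ψ1
  induction ψ1 with
  | var p =>
      intro ψ2 h
      cases ψ2 with
      | var q => simp only [encF, Nat.pair_eq_pair] at h; rw [h.2]
      | neg ψ => simp [encF, Nat.pair_eq_pair] at h
      | conj ψ χ => simp [encF, Nat.pair_eq_pair] at h
  | neg ψ ih =>
      intro ψ2 h
      cases ψ2 with
      | var q => simp [encF, Nat.pair_eq_pair] at h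
      | neg ψ' => simp only [encF, Nat.pair_eq_pair] at h; rw [ih h.2]
      | conj ψ' χ' => simp [encF, Nat.pair_eq_pair] at h
  | conj ψ χ ih1 ih2 =>
      intro ψ2 h
      cases ψ2 with
      | var q => simp [encF, Nat.pair_eq_pair] at h
      | neg ψ' => simp [encF, Nat.pair_eq_pair] at h
      | conj ψ' χ' =>
          simp only [encF, Nat.pair_eq_pair] at h
          rw [ih1 h.2.1, ih2 h.2.2]

lemma encO_inj : Function.Injective encO := by
  intro o1 o2 h
  rw [encO, encO, Nat.pair_eq_pair] at h
  exact Prod.ext (encF_inj h.1) (encL_inj h.2)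

/-- A canonical class renaming for an equivalence relation `r` on `Occ(K)`,
using fresh variables `≥ N` for classes not containing all occurrences of their variable. -/
noncomputable def mkRho (K : PB) (r : Rel) (N : ℕ) (o : Occurrence) : ℕ :=
  if IsOccVar K o (varOf o) ∧ ∀ o', IsOccVar K o' (varOf o) → (o, o') ∈ r then varOf o
  else N + sInf {n | ∃ o', (o, o') ∈ r ∧ encO o' = n}

lemma mkRho_range {K : PB} {r : Rel} {N : ℕ} {o : Occurrence} :
    mkRho K r N o ∈ varsPB K ∨ N ≤ mkRho K r N o := by
  rw [mkRho]
  split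
  · next hcond => exact Or.inl (mem_varsPB_of_occ hcond.1)
  · exact Or.inr (Nat.le_add_right _ _)

lemma mkRho_isClassRenaming {K : PB} {r : Rel} {N : ℕ}
    (hEq : IsEquivOn K r) (hC : Compliant r) (hN : ∀ p ∈ varsPB K, p < N) :
    IsClassRenaming K r (mkRho K r N) := by
  have hSne : ∀ o, IsOcc K o → (encO o) ∈ {n | ∃ o', (o, o') ∈ r ∧ encO o' = n} :=
    fun o ho => ⟨o, hEq.refl o ho, rfl⟩
  have hcond_iff : ∀ o o', (o, o') ∈ r →
      ((IsOccVar K o (varOf o) ∧ ∀ o'', IsOccVar K o'' (varOf o) → (o, o'') ∈ r) →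
       (IsOccVar K o' (varOf o') ∧ ∀ o'', IsOccVar K o'' (varOf o') → (o', o'') ∈ r)) := by
    intro o o' hrel hcond
    have hvv : varOf o = varOf o' := varOf_eq_of_sameVar (hC _ hrel)
    refine ⟨isOccVar_varOf (hEq.dom _ hrel).2, ?_⟩
    intro o'' h''
    rw [← hvv] at h''
    exact hEq.trans o' o o'' (hEq.symm _ hrel) (hcond.2 o'' h'')
  have hSeq : ∀ o o', (o, o') ∈ r →
      {n | ∃ a, (o, a) ∈ r ∧ encO a = n} = {n | ∃ a, (o', a) ∈ r ∧ encO a = n} := by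
    intro o o' hrel
    ext n
    constructor
    · rintro ⟨a, ha, rfl⟩; exact ⟨a, hEq.trans o' o a (hEq.symm _ hrel) ha, rfl⟩
    · rintro ⟨a, ha, rfl⟩; exact ⟨a, hEq.trans o o' a hrel ha, rfl⟩
  constructor
  · intro o o' ho ho'
    constructor
    · -- ρ o = ρ o' → (o, o') ∈ r
      intro hρ
      rw [mkRho, mkRho] at hρ
      by_cases h1 : IsOccVar K o (varOf o) ∧ ∀ o'', IsOccVar K o'' (varOf o) → (o, o'') ∈ r <;>
        by_cases h2 : IsOccVar K o' (varOf o') ∧ ∀ o'', IsOccVar K o'' (varOf o') → (o', o'') ∈ r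
      · rw [if_pos h1, if_pos h2] at hρ
        refine h1.2 o' ?_
        rw [hρ]; exact isOccVar_varOf ho'
      · rw [if_pos h1, if_neg h2] at hρ
        have := hN _ (mem_varsPB_of_occ h1.1)
        omega
      · rw [if_neg h1, if_pos h2] at hρ
        have := hN _ (mem_varsPB_of_occ h2.1)
        omega
      · rw [if_neg h1, if_neg h2] at hρ
        have heq : sInf {n | ∃ a, (o, a) ∈ r ∧ encO a = n}
            = sInf {n | ∃ a, (o', a) ∈ r ∧ encO a = n} := by omega
        obtain ⟨a, ha, hae⟩ := Nat.sInf_mem ⟨encO o, hSne o ho⟩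
        obtain ⟨b, hb, hbe⟩ := Nat.sInf_mem ⟨encO o', hSne o' ho'⟩
        have h3 : encO a = encO b := by rw [hae, heq, hbe]
        have h4 : a = b := encO_inj h3
        subst h4
        exact hEq.trans o a o' ha (hEq.symm _ hb)
    · -- (o, o') ∈ r → ρ o = ρ o'
      intro hrel
      rw [mkRho, mkRho]
      by_cases h1 : IsOccVar K o (varOf o) ∧ ∀ o'', IsOccVar K o'' (varOf o) → (o, o'') ∈ r
      · rw [if_pos h1, if_pos (hcond_iff o o' hrel h1)]
        exact varOf_eq_of_sameVar (hC _ hrel)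
      · have h2 : ¬ (IsOccVar K o' (varOf o') ∧
            ∀ o'', IsOccVar K o'' (varOf o') → (o', o'') ∈ r) :=
          fun hc => h1 (hcond_iff o' o (hEq.symm _ hrel) hc)
        rw [if_neg h1, if_neg h2, hSeq o o' hrel]
  · intro o p hop hall
    have hvar : varOf o = p := varOf_eq hop
    have hcond : IsOccVar K o (varOf o) ∧ ∀ o'', IsOccVar K o'' (varOf o) → (o, o'') ∈ r := by
      rw [hvar]; exact ⟨hop, hall⟩
    rw [mkRho, if_pos hcond]
    exact hvar
end Aux3
end Occ
namespace Occ
section Main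
open scoped Classical

lemma inf2_to_infA2 {K : PB} {R : Occurrence → ℕ} {φ : Form}
    (hR : IsCRenaming K R) (h2 : Inf2 K R φ) : InfA2 K R φ := by
  intro μ hmin w hw
  have hMCR : IsMCR K R (agreeRel K μ) := isMCR_agreeRel hR hmin
  set r : Rel := agreeRel K μ with hrdef
  set N : ℕ := (varsPB K ∪ vars φ).sup id + 1 with hNdef
  have hNlt : ∀ p ∈ varsPB K ∪ vars φ, p < N := by
    intro p hp
    have h : p ≤ (varsPB K ∪ vars φ).sup id := Finset.le_sup (f := id) hp
    omega
  set ρ := mkRho K r N with hρdef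
  have hCR : IsClassRenaming K r ρ :=
    mkRho_isClassRenaming hMCR.1 hMCR.2.1 (fun p hp => hNlt p (Finset.mem_union_left _ hp))
  set σ : ℕ → ℕ := fun p =>
    if h : p ∈ varsPB K ∧ p ∈ vars φ then ρ (hw p h.1).choose else p with hσdef
  have hTC : IsTupleChoice K φ ρ σ := by
    constructor
    · intro p hpK hpφ
      refine ⟨(hw p hpK).choose, (hw p hpK).choose_spec.1, ?_⟩
      simp only [hσdef]
      rw [dif_pos ⟨hpK, hpφ⟩]
    · intro p hnp
      simp only [hσdef]
      rw [dif_neg hnp]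
  have hEnt := h2 r ρ hMCR hCR σ hTC
  set w' : ℕ → Bool := fun q =>
    if h : ∃ o, IsOcc K o ∧ ρ o = q then μ h.choose else w q with hw'def
  have hw'ρ : ∀ o, IsOcc K o → w' (ρ o) = μ o := by
    intro o ho
    have hex : ∃ o', IsOcc K o' ∧ ρ o' = ρ o := ⟨o, ho, rfl⟩
    simp only [hw'def]
    rw [dif_pos hex]
    obtain ⟨ho₁, hρeq⟩ := hex.choose_spec
    have hrel : (hex.choose, o) ∈ r := (hCR.1 _ o ho₁ ho).1 hρeq
    exact hrel.2.2.2
  have hmodels : ∀ ψ ∈ K, eval w' (renameForm ρ ψ) = true := by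
    intro ψ hψ
    rw [eval_renameForm,
      evalO_congr ψ true _ (fun l => μ (ψ, l)) (fun l hl => hw'ρ _ (isOcc_of_path hψ hl))]
    exact (oModel_iff hR μ).1 hmin.1 ψ hψ
  have h5 := hEnt w' hmodels
  rw [eval_substV'] at h5
  rw [← h5]
  apply eval_congr_vars
  intro p hpφ
  by_cases hpK : p ∈ varsPB K
  · have hps : σ p = ρ (hw p hpK).choose := by
      simp only [hσdef]; rw [dif_pos ⟨hpK, hpφ⟩]
    rw [hps, hw'ρ _ (isOcc_of_isOccVar (hw p hpK).choose_spec.1)]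
    exact (hw p hpK).choose_spec.2
  · have hps : σ p = p := by
      simp only [hσdef]; rw [dif_neg (fun hc => hpK hc.1)]
    rw [hps]
    have hnone : ¬ ∃ o, IsOcc K o ∧ ρ o = p := by
      rintro ⟨o, ho, hop⟩
      have hrange : ρ o ∈ varsPB K ∨ N ≤ ρ o := mkRho_range
      rw [hop] at hrange
      rcases hrange with hmem | hge
      · exact hpK hmem
      · have := hNlt p (Finset.mem_union_right _ hpφ)
        omega
    simp only [hw'def]
    rw [dif_neg hnone]

lemma infA2_to_inf2 {K : PB} {R : Occurrence → ℕ} {φ : Form}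
    (hR : IsCRenaming K R) (hA : InfA2 K R φ) : Inf2 K R φ := by
  intro r ρ hMCR hCR σ hTC w' hw'
  set μ : Occurrence → Bool := fun o => w' (ρ o) with hμdef
  have hμmodel : OModel K R μ := by
    rw [oModel_iff hR]
    intro ψ hψ
    have h := hw' ψ hψ
    rw [eval_renameForm] at h
    exact h
  have hsub : r ⊆ agreeRel K μ := by
    rintro ⟨o, o'⟩ hq
    obtain ⟨ho, ho'⟩ := hMCR.1.dom _ hq
    refine ⟨ho, ho', hMCR.2.1 _ hq, ?_⟩
    simp only [hμdef]
    rw [(hCR.1 o o' ho ho').2 hq]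
  have hmin : AMinOModel K R μ := aMin_of_isMCR hR hMCR hμmodel hsub
  set w : ℕ → Bool := fun p =>
    if hp : p ∈ varsPB K then
      (if hpφ : p ∈ vars φ then μ ((hTC.1 p hp hpφ).choose)
       else μ ((exists_occ_of_mem_varsPB hp).choose))
    else w' p with hwdef
  have hcompat : Compatible K μ w := by
    intro p hp
    by_cases hpφ : p ∈ vars φ
    · refine ⟨(hTC.1 p hp hpφ).choose, (hTC.1 p hp hpφ).choose_spec.1, ?_⟩
      simp only [hwdef]; rw [dif_pos hp, dif_pos hpφ]
    · refine ⟨(exists_occ_of_mem_varsPB hp).choose, (exists_occ_of_mem_varsPB hp).choose_spec, ?_⟩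
      simp only [hwdef]; rw [dif_pos hp, dif_neg hpφ]
  have heval := hA μ hmin w hcompat
  rw [eval_substV', ← heval]
  apply eval_congr_vars
  intro p hpφ
  by_cases hp : p ∈ varsPB K
  · obtain ⟨hov, hσp⟩ := (hTC.1 p hp hpφ).choose_spec
    rw [hσp]
    have hwp : w p = μ ((hTC.1 p hp hpφ).choose) := by
      simp only [hwdef]; rw [dif_pos hp, dif_pos hpφ]
    rw [hwp]
  · rw [hTC.2 p (fun hc => hp hc.1)]
    simp only [hwdef]
    rw [dif_neg hp]

end Main
end Occ

/-- Proposition 15: `K ⊩_{a2} φ` iff `K ⊩₂ φ`. -/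
theorem infA2_iff_inf2 (K : Occ.PB)
    (R : Occ.Occurrence → ℕ) (hR : Occ.IsCRenaming K R) (φ : Occ.Form) :
    Occ.InfA2 K R φ ↔ Occ.Inf2 K R φ := by
  exact ⟨fun h => Occ.infA2_to_inf2 hR h, fun h => Occ.inf2_to_infA2 hR h⟩
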